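/- Let φ : (V → Bool) → Bool be a contingent Boolean function over a finite type V of variables, and let ρ : V → Option Bool be a partial assignment. Then φ(Y) = true for every total assignment Y extending ρ if and only if some prime implicant of φ is made true by ρ (i.e., every literal of at least one prime implicant cube is true under ρ). -/
import Mathlib


namespace BoolFun

variable {V : Type*} [Fintype V]

/-- A total assignment `Y` extends (equivalently, satisfies) a partial
assignment / cube `ρ` if it agrees with `ρ` wherever `ρ` is defined. -/
def Extends (ρ : V → Option Bool) (Y : V → Bool) : Prop :=
  ∀ v b, ρ v = some b → Y v = b

/-- A cube `C` is an implicant of `φ` if `φ` is true on every total assignment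
satisfying `C`. -/
def Implicant (φ : (V → Bool) → Bool) (C : V → Option Bool) : Prop :=
  ∀ Y : V → Bool, Extends C Y → φ Y = true

/-- `C' ⊑ C`: at every variable, `C'` is undefined or agrees with `C`. -/
def CubeLE (C' C : V → Option Bool) : Prop :=
  ∀ v, C' v = none ∨ C' v = C v

/-- A prime implicant: an implicant none of whose proper sub-cubes is an implicant. -/
def PrimeImplicant (φ : (V → Bool) → Bool) (C : V → Option Bool) : Prop :=
  Implicant φ C ∧ ∀ C', CubeLE C' C → C' ≠ C → ¬ Implicant φ C'

/-- `ρ` makes the cube `C` true: `ρ` agrees with `C` on every variable where `C`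
is defined (every literal of `C` is true under `ρ`). -/
def MadeTrue (ρ C : V → Option Bool) : Prop :=
  ∀ v b, C v = some b → ρ v = some b

/-- `φ` is contingent: neither constantly true nor constantly false. -/
def Contingent (φ : (V → Bool) → Bool) : Prop :=
  (∃ Y, φ Y = true) ∧ (∃ Y, φ Y = false)

/-- A contingent Boolean function is necessarily true at a partial assignment `ρ`
iff some prime implicant of `φ` is made true by `ρ`. -/
lemma exists_prime_le (φ : (V → Bool) → Bool) :
    ∀ n (C : V → Option Bool),
      (Finset.univ.filter fun v => (C v).isSome).card ≤ n → Implicant φ C →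
      ∃ C', PrimeImplicant φ C' ∧ CubeLE C' C := by
  intro n
  induction n with
  | zero =>
    intro C hc hI
    refine ⟨C, ⟨hI, ?_⟩, fun v => Or.inr rfl⟩
    intro C' hle hne _
    apply hne
    have hnone : ∀ v, C v = none := by
      intro v
      by_contra h
      have : v ∈ Finset.univ.filter fun v => (C v).isSome := by
        simp [Option.isSome_iff_ne_none, h]
      have := Finset.card_pos.mpr ⟨v, this⟩
      omega
    funext v
    rcases hle v with h | h
    · rw [h, hnone v]
    · exact h
  | succ n ih =>
    intro C hc hI
    by_cases hp : PrimeImplicant φ C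
    · exact ⟨C, hp, fun v => Or.inr rfl⟩
    · have : ∃ C'', CubeLE C'' C ∧ C'' ≠ C ∧ Implicant φ C'' := by
        by_contra h
        push_neg at h
        exact hp ⟨hI, fun C' h1 h2 => h C' h1 h2⟩
      obtain ⟨C'', hle, hne, hI''⟩ := this
      have hsub : (Finset.univ.filter fun v => (C'' v).isSome) ⊂
          (Finset.univ.filter fun v => (C v).isSome) := by
        constructor
        · intro v hv
          simp only [Finset.mem_filter, Finset.mem_univ, true_and] at hv ⊢
          rcases hle v with h | h
          · rw [h] at hv; simp at hv
          · rwa [h] at hv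
        · intro hsup
          apply hne
          funext v
          rcases hle v with h | h
          · by_cases hv : (C v).isSome
            · have : v ∈ Finset.univ.filter fun v => (C'' v).isSome :=
                hsup (by simpa using hv)
              simp only [Finset.mem_filter] at this
              rw [h] at this; simp at this
            · rw [h, Option.not_isSome_iff_eq_none.mp hv]
          · exact h
      have hcard : (Finset.univ.filter fun v => (C'' v).isSome).card ≤ n := by
        have := Finset.card_lt_card hsub
        omega
      obtain ⟨C', hp', hle'⟩ := ih C'' hcard hI''
      refine ⟨C', hp', fun v => ?_⟩
      rcases hle' v with h | h
      · exact Or.inl h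
      · rcases hle v with h2 | h2
        · exact Or.inl (h.trans h2)
        · exact Or.inr (h.trans h2)

theorem necessarily_true_iff_some_prime_implicant_made_true
    (φ : (V → Bool) → Bool) (hφ : Contingent φ) (ρ : V → Option Bool) :
    (∀ Y : V → Bool, Extends ρ Y → φ Y = true) ↔
      ∃ C, PrimeImplicant φ C ∧ MadeTrue ρ C := by
  constructor
  · intro h
    obtain ⟨C, hp, hle⟩ := exists_prime_le φ
      (Finset.univ.filter fun v => (ρ v).isSome).card ρ le_rfl h
    refine ⟨C, hp, fun v b hv => ?_⟩
    rcases hle v with h' | h'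
    · rw [h'] at hv; exact absurd hv (by simp)
    · rw [← h', hv]
  · rintro ⟨C, ⟨hI, _⟩, hmt⟩ Y hY
    exact hI Y fun v b hv => hY v b (hmt v b hv)

end BoolFun
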